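/- Let $a\in(-1,1)$, $\nu=(a-1)/2$, and define $h_2(z)=(z/4)^{1-a}e^{-z/2}\sum_{k=0}^\infty \frac{(z/4)^{2k}}{k!\,\Gamma(k-\nu+1)}$ for $z>0$. Then $h_2$ satisfies the ODE $z h''(z)+(z+a)h'(z)+\frac a2 h(z)=0$ for all $z>0$. -/

import Mathlib

noncomputable section
open Real

/-- The solution `h₂(z) = (z/4)^{1-a} e^{-z/2} ∑_{k≥0} (z/4)^{2k} / (k! Γ(k-ν+1))`
with `ν = (a-1)/2`. -/
def h₂ (a z : ℝ) : ℝ :=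
  (z / 4) ^ (1 - a) * Real.exp (-z / 2) *
    ∑' k : ℕ, (z / 4) ^ (2 * k) / ((Nat.factorial k : ℝ) * Real.Gamma ((k : ℝ) - (a - 1) / 2 + 1))

/-- Denominator of the series terms. -/
def h2D (a : ℝ) (k : ℕ) : ℝ :=
  (Nat.factorial k : ℝ) * Real.Gamma ((k : ℝ) - (a - 1) / 2 + 1)

/-- Series terms. -/
def h2f0 (a : ℝ) (k : ℕ) (z : ℝ) : ℝ := (z / 4) ^ (2 * k) / h2D a k

/-- First derivative of the series terms. -/
def h2f1 (a : ℝ) (k : ℕ) (z : ℝ) : ℝ :=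
  ((2 * k : ℕ) : ℝ) * (z / 4) ^ (2 * k - 1) * (1 / 4) / h2D a k

/-- Second derivative of the series terms. -/
def h2f2 (a : ℝ) (k : ℕ) (z : ℝ) : ℝ :=
  ((2 * k : ℕ) : ℝ) * (((2 * k - 1 : ℕ) : ℝ) * (z / 4) ^ (2 * k - 1 - 1)) * (1 / 4) * (1 / 4) /
    h2D a k

lemma h2_arg_pos {a : ℝ} (ha₂ : a < 1) (k : ℕ) : 0 < (k : ℝ) - (a - 1) / 2 + 1 := by
  have : (0:ℝ) ≤ (k:ℝ) := Nat.cast_nonneg k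
  linarith

lemma h2Gamma_pos {a : ℝ} (ha₂ : a < 1) (k : ℕ) :
    0 < Real.Gamma ((k : ℝ) - (a - 1) / 2 + 1) :=
  Real.Gamma_pos_of_pos (h2_arg_pos ha₂ k)

lemma h2G1_pos {a : ℝ} (ha₂ : a < 1) : 0 < Real.Gamma (1 - (a - 1) / 2) :=
  Real.Gamma_pos_of_pos (by linarith)

lemma h2D_pos {a : ℝ} (ha₂ : a < 1) (k : ℕ) : 0 < h2D a k :=
  mul_pos (by exact_mod_cast Nat.factorial_pos k) (h2Gamma_pos ha₂ k)

lemma h2Gamma_ge {a : ℝ} (ha₂ : a < 1) (k : ℕ) :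
    (Nat.factorial k : ℝ) * Real.Gamma (1 - (a - 1) / 2) ≤
      Real.Gamma ((k : ℝ) - (a - 1) / 2 + 1) := by
  induction k with
  | zero =>
      apply le_of_eq
      rw [Nat.factorial_zero, Nat.cast_zero, Nat.cast_one, one_mul]
      congr 1
      ring
  | succ n ih =>
      have harg : (0:ℝ) < (n : ℝ) - (a - 1) / 2 + 1 := h2_arg_pos ha₂ n
      have hΓ : 0 < Real.Gamma ((n : ℝ) - (a - 1) / 2 + 1) := h2Gamma_pos ha₂ n
      have hcast : ((n + 1 : ℕ) : ℝ) - (a - 1) / 2 + 1 = ((n : ℝ) - (a - 1) / 2 + 1) + 1 := by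
        push_cast; ring
      rw [hcast, Real.Gamma_add_one (ne_of_gt harg)]
      have hfac : ((Nat.factorial (n + 1) : ℕ) : ℝ) = ((n : ℝ) + 1) * (Nat.factorial n : ℝ) := by
        rw [Nat.factorial_succ]; push_cast; ring
      rw [hfac]
      have h1 : ((n : ℝ) + 1) * ((Nat.factorial n : ℝ) * Real.Gamma (1 - (a - 1) / 2)) ≤
          ((n : ℝ) + 1) * Real.Gamma ((n : ℝ) - (a - 1) / 2 + 1) := by
        apply mul_le_mul_of_nonneg_left ih
        positivity
      have h2 : ((n : ℝ) + 1) * Real.Gamma ((n : ℝ) - (a - 1) / 2 + 1) ≤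
          ((n : ℝ) - (a - 1) / 2 + 1) * Real.Gamma ((n : ℝ) - (a - 1) / 2 + 1) := by
        apply mul_le_mul_of_nonneg_right _ hΓ.le
        linarith
      calc ((n : ℝ) + 1) * (Nat.factorial n : ℝ) * Real.Gamma (1 - (a - 1) / 2)
          = ((n : ℝ) + 1) * ((Nat.factorial n : ℝ) * Real.Gamma (1 - (a - 1) / 2)) := by ring
        _ ≤ ((n : ℝ) + 1) * Real.Gamma ((n : ℝ) - (a - 1) / 2 + 1) := h1
        _ ≤ ((n : ℝ) - (a - 1) / 2 + 1) * Real.Gamma ((n : ℝ) - (a - 1) / 2 + 1) := h2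

lemma h2nat2k (k : ℕ) : 2 * k ≤ 16 ^ k := by
  induction k with
  | zero => simp
  | succ n ih =>
      have h : 1 ≤ 16 ^ n := Nat.one_le_pow n 16 (by norm_num)
      rw [pow_succ]
      omega

lemma h2nat4k (k : ℕ) : 2 * k * (2 * k) ≤ 16 ^ k := by
  induction k with
  | zero => simp
  | succ n ih =>
      have h : 1 ≤ 16 ^ n := Nat.one_le_pow n 16 (by norm_num)
      have h2 := h2nat2k n
      rw [pow_succ]
      nlinarith

/-- Generic bound for the series terms on a ball of radius `R ≥ 1`. -/
lemma h2_gen_bound {a : ℝ} (ha₂ : a < 1) {R y c : ℝ} (hR : 1 ≤ R) (hy : |y| ≤ R)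
    {m k : ℕ} (hm : m ≤ 2 * k) (hc : |c| ≤ (16 : ℝ) ^ k) :
    |c * (y / 4) ^ m / h2D a k| ≤
      (16 * R ^ 2) ^ k / ((Nat.factorial k : ℝ) * Real.Gamma (1 - (a - 1) / 2)) := by
  have hD := h2D_pos ha₂ k
  have hG1 := h2G1_pos ha₂
  have hfac1 : (1 : ℝ) ≤ (Nat.factorial k : ℝ) := Nat.one_le_cast.mpr (Nat.factorial_pos k)
  have h1 : |c * (y / 4) ^ m / h2D a k| = |c| * |y / 4| ^ m / h2D a k := by
    rw [abs_div, abs_of_pos hD, abs_mul, abs_pow]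
  have hy4 : |y / 4| ≤ R := by
    have : |y / 4| = |y| / 4 := by rw [abs_div]; norm_num
    rw [this]; linarith
  have h2 : |y / 4| ^ m ≤ R ^ (2 * k) :=
    le_trans (pow_le_pow_left₀ (abs_nonneg _) hy4 m) (pow_le_pow_right₀ (by linarith) hm)
  have h3 : |c| * |y / 4| ^ m ≤ 16 ^ k * R ^ (2 * k) :=
    mul_le_mul hc h2 (by positivity) (by positivity)
  have h4 : (16 * R ^ 2 : ℝ) ^ k = 16 ^ k * R ^ (2 * k) := by
    rw [mul_pow, pow_mul]
  have h5 : (Nat.factorial k : ℝ) * Real.Gamma (1 - (a - 1) / 2) ≤ h2D a k := by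
    refine le_trans (h2Gamma_ge ha₂ k) ?_
    exact le_mul_of_one_le_left (h2Gamma_pos ha₂ k).le hfac1
  rw [h1, h4]
  exact div_le_div₀ (by positivity) h3 (by positivity) h5

lemma h2f0_bound {a : ℝ} (ha₂ : a < 1) {R y : ℝ} (hR : 1 ≤ R) (hy : |y| ≤ R) (k : ℕ) :
    ‖h2f0 a k y‖ ≤
      (16 * R ^ 2) ^ k / ((Nat.factorial k : ℝ) * Real.Gamma (1 - (a - 1) / 2)) := by
  have e : h2f0 a k y = 1 * (y / 4) ^ (2 * k) / h2D a k := by unfold h2f0; ring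
  rw [Real.norm_eq_abs, e]
  exact h2_gen_bound ha₂ hR hy le_rfl (by
    rw [abs_one]
    calc (1:ℝ) = 1 ^ k := (one_pow k).symm
      _ ≤ 16 ^ k := pow_le_pow_left₀ (by norm_num) (by norm_num) k)

lemma h2f1_bound {a : ℝ} (ha₂ : a < 1) {R y : ℝ} (hR : 1 ≤ R) (hy : |y| ≤ R) (k : ℕ) :
    ‖h2f1 a k y‖ ≤
      (16 * R ^ 2) ^ k / ((Nat.factorial k : ℝ) * Real.Gamma (1 - (a - 1) / 2)) := by
  have e : h2f1 a k y = (((2 * k : ℕ) : ℝ) * (1 / 4)) * (y / 4) ^ (2 * k - 1) / h2D a k := by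
    unfold h2f1; ring
  rw [Real.norm_eq_abs, e]
  refine h2_gen_bound ha₂ hR hy (Nat.sub_le _ _) ?_
  have h1 : ((2 * k : ℕ) : ℝ) ≤ (16 : ℝ) ^ k := by
    calc ((2 * k : ℕ) : ℝ) ≤ ((16 ^ k : ℕ) : ℝ) := by exact_mod_cast h2nat2k k
      _ = (16 : ℝ) ^ k := by push_cast; ring
  have h2 : (0:ℝ) ≤ ((2 * k : ℕ) : ℝ) := Nat.cast_nonneg _
  rw [abs_of_nonneg (by positivity)]
  nlinarith

lemma h2f2_bound {a : ℝ} (ha₂ : a < 1) {R y : ℝ} (hR : 1 ≤ R) (hy : |y| ≤ R) (k : ℕ) :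
    ‖h2f2 a k y‖ ≤
      (16 * R ^ 2) ^ k / ((Nat.factorial k : ℝ) * Real.Gamma (1 - (a - 1) / 2)) := by
  have e : h2f2 a k y = (((2 * k : ℕ) : ℝ) * ((2 * k - 1 : ℕ) : ℝ) * (1 / 16)) *
      (y / 4) ^ (2 * k - 1 - 1) / h2D a k := by
    unfold h2f2; ring
  rw [Real.norm_eq_abs, e]
  refine h2_gen_bound ha₂ hR hy (by omega) ?_
  have h1 : ((2 * k : ℕ) : ℝ) * ((2 * k - 1 : ℕ) : ℝ) ≤ (16 : ℝ) ^ k := by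
    have hle : (2 * k) * (2 * k - 1) ≤ 16 ^ k := le_trans
      (Nat.mul_le_mul_left _ (Nat.sub_le _ _)) (h2nat4k k)
    calc ((2 * k : ℕ) : ℝ) * ((2 * k - 1 : ℕ) : ℝ) = (((2 * k) * (2 * k - 1) : ℕ) : ℝ) := by
          push_cast; ring
      _ ≤ ((16 ^ k : ℕ) : ℝ) := by exact_mod_cast hle
      _ = (16 : ℝ) ^ k := by push_cast; ring
  have h2 : (0:ℝ) ≤ ((2 * k : ℕ) : ℝ) * ((2 * k - 1 : ℕ) : ℝ) := by positivity
  rw [abs_of_nonneg (by positivity)]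
  nlinarith

lemma h2u_summable (a R : ℝ) :
    Summable (fun k : ℕ =>
      (16 * R ^ 2) ^ k / ((Nat.factorial k : ℝ) * Real.Gamma (1 - (a - 1) / 2))) := by
  simpa only [div_div] using
    (summable_pow_div_factorial (16 * R ^ 2 : ℝ)).div_const (Real.Gamma (1 - (a - 1) / 2))

lemma h2sum0 {a : ℝ} (ha₂ : a < 1) (x : ℝ) : Summable (fun k => h2f0 a k x) :=
  Summable.of_norm_bounded (h2u_summable a (|x| + 1))
    (fun k => h2f0_bound ha₂ (by linarith [abs_nonneg x]) (by linarith) k)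

lemma h2sum1 {a : ℝ} (ha₂ : a < 1) (x : ℝ) : Summable (fun k => h2f1 a k x) :=
  Summable.of_norm_bounded (h2u_summable a (|x| + 1))
    (fun k => h2f1_bound ha₂ (by linarith [abs_nonneg x]) (by linarith) k)

lemma h2sum2 {a : ℝ} (ha₂ : a < 1) (x : ℝ) : Summable (fun k => h2f2 a k x) :=
  Summable.of_norm_bounded (h2u_summable a (|x| + 1))
    (fun k => h2f2_bound ha₂ (by linarith [abs_nonneg x]) (by linarith) k)

lemma h2f0_hasDerivAt (a : ℝ) (k : ℕ) (x : ℝ) : HasDerivAt (h2f0 a k) (h2f1 a k x) x := by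
  have h1 : HasDerivAt (fun y : ℝ => y / 4) (1 / 4) x := by
    simpa using (hasDerivAt_id x).div_const 4
  have h2 := ((hasDerivAt_pow (2 * k) (x / 4)).comp x h1).div_const (h2D a k)
  have h3 : h2f1 a k x = (((2 * k : ℕ) : ℝ) * (x / 4) ^ (2 * k - 1)) * (1 / 4) / h2D a k := by
    unfold h2f1; ring
  rw [h3]
  exact h2

lemma h2f1_hasDerivAt (a : ℝ) (k : ℕ) (x : ℝ) : HasDerivAt (h2f1 a k) (h2f2 a k x) x := by
  have h1 : HasDerivAt (fun y : ℝ => y / 4) (1 / 4) x := by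
    simpa using (hasDerivAt_id x).div_const 4
  have h2 := (((((hasDerivAt_pow (2 * k - 1) (x / 4)).comp x h1).const_mul
    (((2 * k : ℕ) : ℝ))).mul_const (1 / 4)).div_const (h2D a k))
  have h3 : h2f2 a k x =
      ((2 * k : ℕ) : ℝ) * (((2 * k - 1 : ℕ) : ℝ) * (x / 4) ^ (2 * k - 1 - 1) * (1 / 4)) * (1 / 4) /
        h2D a k := by
    unfold h2f2; ring
  rw [h3]
  exact h2

lemma h2F_deriv {a : ℝ} (ha₂ : a < 1) (x : ℝ) :
    HasDerivAt (fun y => ∑' k, h2f0 a k y) (∑' k, h2f1 a k x) x := by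
  have hR1 : (1:ℝ) ≤ |x| + 1 := by linarith [abs_nonneg x]
  refine hasDerivAt_tsum_of_isPreconnected (h2u_summable a (|x| + 1)) Metric.isOpen_ball
    (convex_ball (0:ℝ) (|x| + 1)).isPreconnected
    (fun k y _ => h2f0_hasDerivAt a k y)
    (fun k y hy => h2f1_bound ha₂ hR1 (le_of_lt (mem_ball_zero_iff.mp hy)) k)
    (Metric.mem_ball_self (by linarith)) ?_ (mem_ball_zero_iff.mpr (lt_add_one _))
  exact h2sum0 ha₂ 0

lemma h2F1_deriv {a : ℝ} (ha₂ : a < 1) (x : ℝ) :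
    HasDerivAt (fun y => ∑' k, h2f1 a k y) (∑' k, h2f2 a k x) x := by
  have hR1 : (1:ℝ) ≤ |x| + 1 := by linarith [abs_nonneg x]
  refine hasDerivAt_tsum_of_isPreconnected (h2u_summable a (|x| + 1)) Metric.isOpen_ball
    (convex_ball (0:ℝ) (|x| + 1)).isPreconnected
    (fun k y _ => h2f1_hasDerivAt a k y)
    (fun k y hy => h2f2_bound ha₂ hR1 (le_of_lt (mem_ball_zero_iff.mp hy)) k)
    (Metric.mem_ball_self (by linarith)) ?_ (mem_ball_zero_iff.mpr (lt_add_one _))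
  exact h2sum1 ha₂ 0

set_option maxHeartbeats 1000000 in
/-- The key recurrence identity for consecutive terms. -/
lemma h2key {a : ℝ} (ha₂ : a < 1) (k : ℕ) (z : ℝ) :
    z * h2f2 a (k + 1) z + (2 - a) * h2f1 a (k + 1) z = z / 4 * h2f0 a k z := by
  have harg : (0:ℝ) < (k : ℝ) - (a - 1) / 2 + 1 := h2_arg_pos ha₂ k
  have hΓ : 0 < Real.Gamma ((k : ℝ) - (a - 1) / 2 + 1) := h2Gamma_pos ha₂ k
  have hGam : Real.Gamma (((k + 1 : ℕ) : ℝ) - (a - 1) / 2 + 1) =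
      ((k : ℝ) - (a - 1) / 2 + 1) * Real.Gamma ((k : ℝ) - (a - 1) / 2 + 1) := by
    have : ((k + 1 : ℕ) : ℝ) - (a - 1) / 2 + 1 = ((k : ℝ) - (a - 1) / 2 + 1) + 1 := by
      push_cast; ring
    rw [this, Real.Gamma_add_one (ne_of_gt harg)]
  have e1 : 2 * (k + 1) - 1 = 2 * k + 1 := by omega
  have e2 : 2 * (k + 1) - 1 - 1 = 2 * k := by omega
  have hfacpos : (0:ℝ) < (Nat.factorial k : ℝ) := by exact_mod_cast Nat.factorial_pos k
  have hne1 : Real.Gamma ((k : ℝ) - (a - 1) / 2 + 1) ≠ 0 := ne_of_gt hΓ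
  have hne2 : ((k : ℝ) - (a - 1) / 2 + 1) ≠ 0 := ne_of_gt harg
  have hne3 : (Nat.factorial k : ℝ) ≠ 0 := ne_of_gt hfacpos
  have hne4 : ((k : ℝ) + 1) ≠ 0 := by positivity
  unfold h2f2 h2f1 h2f0 h2D
  have hpow1 : (z / 4) ^ (2 * k + 1) = (z / 4) ^ (2 * k) * (z / 4) := pow_succ _ _
  have hD2ne : ((Nat.factorial k : ℕ):ℝ) * Real.Gamma ((k:ℝ) - (a-1)/2 + 1) ≠ 0 :=
    mul_ne_zero hne3 hne1
  have hD1ne : ((Nat.factorial (k+1) : ℕ):ℝ) * Real.Gamma (((k+1:ℕ):ℝ) - (a-1)/2 + 1) ≠ 0 :=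
    mul_ne_zero (Nat.cast_ne_zero.mpr (Nat.factorial_pos _).ne')
      (by rw [hGam]; exact mul_ne_zero hne2 hne1)
  rw [e2, e1, hpow1,
    show ∀ X Y D : ℝ, z * (X / D) + (2-a) * (Y / D) = (z*X + (2-a)*Y)/D from
      fun X Y D => by ring,
    show ∀ X D : ℝ, z/4 * (X / D) = (z/4*X)/D from fun X D => by ring,
    div_eq_div_iff hD1ne hD2ne, hGam, Nat.factorial_succ]
  push_cast
  ring

theorem h2S {a : ℝ} (ha₂ : a < 1) (z : ℝ) :
    z * (∑' k, h2f2 a k z) + (2 - a) * (∑' k, h2f1 a k z) -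
      z / 4 * (∑' k, h2f0 a k z) = 0 := by
  have s0 := h2sum0 ha₂ z
  have s1 := h2sum1 ha₂ z
  have s2 := h2sum2 ha₂ z
  have hg0 : z * h2f2 a 0 z + (2 - a) * h2f1 a 0 z = 0 := by
    simp [h2f1, h2f2]
  have hsumg : Summable (fun k => z * h2f2 a k z + (2 - a) * h2f1 a k z) :=
    (s2.mul_left z).add (s1.mul_left (2 - a))
  have e1 : ∑' k, (z * h2f2 a k z + (2 - a) * h2f1 a k z) =
      z * (∑' k, h2f2 a k z) + (2 - a) * (∑' k, h2f1 a k z) := by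
    rw [Summable.tsum_add (s2.mul_left z) (s1.mul_left (2 - a)), tsum_mul_left, tsum_mul_left]
  have e2 : ∑' k, (z * h2f2 a k z + (2 - a) * h2f1 a k z) =
      z / 4 * (∑' k, h2f0 a k z) := by
    rw [Summable.tsum_eq_zero_add hsumg, hg0, zero_add]
    calc (∑' k : ℕ, (z * h2f2 a (k + 1) z + (2 - a) * h2f1 a (k + 1) z)) =
        ∑' k : ℕ, z / 4 * h2f0 a k z := by
          exact tsum_congr fun k => h2key ha₂ k z
      _ = z / 4 * (∑' k, h2f0 a k z) := tsum_mul_left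
  rw [← e1, e2]
  ring

/-- `h₂` satisfies the ODE `z h'' + (z+a) h' + (a/2) h = 0` for all `z > 0`. -/
theorem h₂_ode (a : ℝ) (ha₁ : -1 < a) (ha₂ : a < 1) (z : ℝ) (hz : 0 < z) :
    z * deriv (deriv (h₂ a)) z + (z + a) * deriv (h₂ a) z + a / 2 * h₂ a z = 0 := by
  have hFd : ∀ x : ℝ, HasDerivAt (fun y => ∑' k, h2f0 a k y) (∑' k, h2f1 a k x) x :=
    h2F_deriv ha₂
  have hF1d : ∀ x : ℝ, HasDerivAt (fun y => ∑' k, h2f1 a k y) (∑' k, h2f2 a k x) x :=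
    h2F1_deriv ha₂
  have hQgen : ∀ (p : ℝ) (x : ℝ), x ≠ 0 →
      HasDerivAt (fun y : ℝ => (y / 4) ^ p) (p * (x / 4) ^ (p - 1) * (1 / 4)) x := by
    intro p x hx
    have h1 : HasDerivAt (fun y : ℝ => y / 4) (1 / 4) x := by
      simpa using (hasDerivAt_id x).div_const 4
    have h2 := (Real.hasDerivAt_rpow_const (x := x / 4) (p := p)
      (Or.inl (div_ne_zero hx (by norm_num)))).comp x h1
    exact h2
  have hE : ∀ x : ℝ, HasDerivAt (fun y : ℝ => Real.exp (-y / 2))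
      (Real.exp (-x / 2) * (-1 / 2)) x := by
    intro x
    have h1 : HasDerivAt (fun y : ℝ => -y / 2) (-1 / 2) x := by
      simpa using ((hasDerivAt_id x).neg.div_const 2)
    exact (Real.hasDerivAt_exp (-x / 2)).comp x h1
  -- first derivative of h₂ at any x > 0
  have hH : ∀ x : ℝ, 0 < x → HasDerivAt (h₂ a)
      (((1 - a) * (x / 4) ^ (1 - a - 1) * (1 / 4) * Real.exp (-x / 2) +
        (x / 4) ^ (1 - a) * (Real.exp (-x / 2) * (-1 / 2))) * (∑' k, h2f0 a k x) +
        (x / 4) ^ (1 - a) * Real.exp (-x / 2) * (∑' k, h2f1 a k x)) x := by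
    intro x hx
    exact ((hQgen (1 - a) x hx.ne').mul (hE x)).mul (hFd x)
  have hev : deriv (h₂ a) =ᶠ[nhds z] (fun x =>
      ((1 - a) * (x / 4) ^ (1 - a - 1) * (1 / 4) * Real.exp (-x / 2) +
        (x / 4) ^ (1 - a) * (Real.exp (-x / 2) * (-1 / 2))) * (∑' k, h2f0 a k x) +
        (x / 4) ^ (1 - a) * Real.exp (-x / 2) * (∑' k, h2f1 a k x)) := by
    filter_upwards [Ioi_mem_nhds hz] with x hx
    exact (hH x hx).deriv
  -- second derivative pieces at z
  have hE2 : HasDerivAt (fun y : ℝ => Real.exp (-y / 2) * (-1 / 2))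
      (Real.exp (-z / 2) * (-1 / 2) * (-1 / 2)) z := (hE z).mul_const (-1 / 2)
  have hQ2 : HasDerivAt (fun y : ℝ => (1 - a) * (y / 4) ^ (1 - a - 1) * (1 / 4))
      ((1 - a) * ((1 - a - 1) * (z / 4) ^ (1 - a - 1 - 1) * (1 / 4)) * (1 / 4)) z :=
    ((hQgen (1 - a - 1) z hz.ne').const_mul (1 - a)).mul_const (1 / 4)
  have hD2 := (((hQ2.mul (hE z)).add ((hQgen (1 - a) z hz.ne').mul hE2)).mul (hFd z)).add
    (((hQgen (1 - a) z hz.ne').mul (hE z)).mul (hF1d z))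
  have h2nd := hev.deriv_eq.trans hD2.deriv
  have h1st := (hH z hz).deriv
  have hhh : h₂ a z = (z / 4) ^ (1 - a) * Real.exp (-z / 2) * ∑' k, h2f0 a k z := rfl
  have h4ne : (z / 4 : ℝ) ≠ 0 := by positivity
  have r2 : (z / 4 : ℝ) ^ (1 - a) = (z / 4) ^ (1 - a - 1) * (z / 4) := by
    have h := Real.rpow_add_one h4ne (1 - a - 1)
    rw [show (1 - a - 1) + 1 = 1 - a by ring] at h
    exact h
  have r1 : (z / 4 : ℝ) ^ (1 - a - 1) = (z / 4) ^ (1 - a - 1 - 1) * (z / 4) := by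
    have h := Real.rpow_add_one h4ne (1 - a - 1 - 1)
    rw [show (1 - a - 1 - 1) + 1 = 1 - a - 1 by ring] at h
    exact h
  have hS := h2S ha₂ z
  simp only [Pi.add_apply, Pi.mul_apply] at h2nd
  rw [h2nd, h1st, hhh, r2, r1]
  linear_combination (((z / 4) ^ (1 - a - 1 - 1) * (z / 4) * (z / 4)) * Real.exp (-z / 2)) * hS
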